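/- (Counterfactual mean from factual score distribution under balancing.) Let 𝔹 be a B-score with functions 𝔽_0, 𝔽_1, and suppose 𝔹 is balanced: T is conditionally independent of 𝔹 given X. Then for each t ∈ {0,1}, the counterfactual conditional mean outcome is given by the factual conditional score distribution: μ_{1−t}(x) = E[𝔽_{1−t}(𝔹) | X = x, T = t] for a.e. x with P(T = t | X = x) > 0; equivalently, μ_{1−t}(x) = E[𝔽_{1−t}(𝔹) | X = x]. -/

import Mathlib

set_option synthInstance.maxHeartbeats 1000000
set_option maxHeartbeats 1000000

open MeasureTheory ProbabilityTheory Filter Topology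


/-- Conditional expectation commutes with coordinate evaluation for `Fin d → ℝ`-valued maps. -/
lemma condexp_pi_eval {Ω : Type*} {m mΩ : MeasurableSpace Ω} (hm : m ≤ mΩ)
    {μ : Measure Ω} [IsFiniteMeasure μ] {d : ℕ}
    {f : Ω → Fin d → ℝ} (hf : Integrable f μ) (i : Fin d) :
    (fun ω => (μ[f|m]) ω i) =ᵐ[μ] μ[(fun ω => f ω i)|m] := by
  let L : (Fin d → ℝ) →L[ℝ] ℝ := ContinuousLinearMap.proj i
  refine ae_eq_condExp_of_forall_setIntegral_eq hm
    (L.integrable_comp hf)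
    (fun s _ _ => (L.integrable_comp integrable_condExp).integrableOn)
    (fun s hs _ => ?_)
    ((L.continuous.comp_stronglyMeasurable stronglyMeasurable_condExp).aestronglyMeasurable)
  calc ∫ ω in s, (μ[f|m]) ω i ∂μ
      = L (∫ ω in s, (μ[f|m]) ω ∂μ) := L.integral_comp_comm integrable_condExp.integrableOn
    _ = L (∫ ω in s, f ω ∂μ) := by rw [setIntegral_condExp hm hf hs]
    _ = ∫ ω in s, f ω i ∂μ := (L.integral_comp_comm hf.integrableOn).symm


/-- Pull-out property of conditional expectation under conditional independence:
if `T ⟂ B | m'`, then `E[1_{T=b} · h(B) | m'] = E[1_{T=b} | m'] · E[h(B) | m']`. -/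
lemma condexp_indicator_mul_comp_of_condIndepFun
    {Ω : Type*} {m' mΩ : MeasurableSpace Ω} {hm' : m' ≤ mΩ}
    [StandardBorelSpace Ω] {μ : Measure Ω} [IsProbabilityMeasure μ]
    {β : Type*} [MeasurableSpace β]
    {T : Ω → Bool} (hT : Measurable T) {B : Ω → β} (hB : Measurable B)
    (hbal : CondIndepFun m' hm' T B μ) (b : Bool) {h : β → ℝ}
    (hh : Integrable h (μ.map B)) :
    μ[(fun ω => (T ⁻¹' {b}).indicator (fun _ => (1:ℝ)) ω * h (B ω))|m']
      =ᵐ[μ] fun ω => (μ[(T ⁻¹' {b}).indicator (fun _ => (1:ℝ))|m']) ω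
          * (μ[(fun ω' => h (B ω'))|m']) ω := by
  set e : Ω → ℝ := (T ⁻¹' {b}).indicator (fun _ => (1:ℝ)) with he_def
  have hTb : MeasurableSet (T ⁻¹' {b}) := hT (measurableSet_singleton b)
  have he_meas : Measurable e := measurable_const.indicator hTb
  have he_bd : ∀ ω, ‖e ω‖ ≤ 1 := by
    intro ω; by_cases hω : ω ∈ T ⁻¹' {b} <;> simp [e, Set.indicator_apply, hω]
  have hcomp : ∀ {g : β → ℝ}, Integrable g (μ.map B) → Integrable (fun ω => g (B ω)) μ :=
    fun {g} hg => (integrable_map_measure hg.aestronglyMeasurable hB.aemeasurable).mp hg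
  have hemul : ∀ {g : Ω → ℝ}, Integrable g μ → Integrable (fun ω => e ω * g ω) μ :=
    fun {g} hg => hg.bdd_mul he_meas.aestronglyMeasurable (Eventually.of_forall he_bd)
  have main : ∀ ⦃g : β → ℝ⦄, Integrable g (μ.map B) →
      (μ[(fun ω => e ω * g (B ω))|m']
        =ᵐ[μ] fun ω => (μ[e|m']) ω * (μ[(fun ω' => g (B ω'))|m']) ω) := by
    apply Integrable.induction
    · -- indicator case
      intro c A hA hAfin
      have hkey := (condIndepFun_iff_condExp_inter_preimage_eq_mul
        (hm' := hm') hT hB).mp hbal {b} A (measurableSet_singleton b) hA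
      have h1 : (fun ω => e ω * (A.indicator (fun _ => c)) (B ω))
          = c • (T ⁻¹' {b} ∩ B ⁻¹' A).indicator (fun _ => (1:ℝ)) := by
        funext ω
        by_cases h1ω : ω ∈ T ⁻¹' {b} <;> by_cases h2ω : ω ∈ B ⁻¹' A <;>
          simp_all [e, Set.indicator_apply, Set.mem_preimage, Set.mem_inter_iff]
      have h2 : (fun ω' => (A.indicator (fun _ => c)) (B ω'))
          = c • (B ⁻¹' A).indicator (fun _ => (1:ℝ)) := by
        funext ω
        by_cases h2ω : ω ∈ B ⁻¹' A <;>
          simp_all [Set.indicator_apply, Set.mem_preimage]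
      rw [h1, h2]
      have hs1 := condExp_smul (μ := μ) (m := m') c
        ((T ⁻¹' {b} ∩ B ⁻¹' A).indicator (fun _ => (1:ℝ)))
      have hs2 := condExp_smul (μ := μ) (m := m') c
        ((B ⁻¹' A).indicator (fun _ => (1:ℝ)))
      filter_upwards [hkey, hs1, hs2] with ω hω hω1 hω2
      rw [hω1, hω2]
      simp only [Pi.smul_apply, smul_eq_mul]
      have : (μ[(T ⁻¹' {b} ∩ B ⁻¹' A).indicator (fun _ => (1:ℝ))|m']) ω
          = (μ[e|m']) ω * (μ[(B ⁻¹' A).indicator (fun _ => (1:ℝ))|m']) ω := hω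
      rw [this]; ring
    · -- additivity
      intro g1 g2 _ hint1 hint2 hP1 hP2
      have hc1 := hcomp hint1
      have hc2 := hcomp hint2
      have hfun : (fun ω => e ω * (g1 + g2) (B ω))
          = (fun ω => e ω * g1 (B ω)) + fun ω => e ω * g2 (B ω) := by
        funext ω; simp [Pi.add_apply]; ring
      have hfun2 : (fun ω' => (g1 + g2) (B ω'))
          = (fun ω' => g1 (B ω')) + fun ω' => g2 (B ω') := by
        funext ω; simp [Pi.add_apply]
      rw [hfun, hfun2]
      refine (condExp_add (hemul hc1) (hemul hc2) _).trans ?_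
      filter_upwards [hP1, hP2, condExp_add (μ := μ) (m := m') hc1 hc2] with ω h1 h2 h3
      simp only [Pi.add_apply] at *
      rw [h1, h2, h3]; ring
    · -- closedness in L¹
      apply IsSeqClosed.isClosed
      intro φs φ hmem hlim
      let E1 : (β → ℝ) → Ω → ℝ := fun ψ => μ[(fun ω => e ω * ψ (B ω))|m']
      let E2 : (β → ℝ) → Ω → ℝ :=
        fun ψ => fun ω => (μ[e|m']) ω * (μ[(fun ω' => ψ (B ω'))|m']) ω
      show E1 ↑φ =ᵐ[μ] E2 ↑φ
      have hmE1 : ∀ ψ : β → ℝ, AEStronglyMeasurable (E1 ψ) μ :=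
        fun ψ => (stronglyMeasurable_condExp.mono hm').aestronglyMeasurable
      have hmE2 : ∀ ψ : β → ℝ, AEStronglyMeasurable (E2 ψ) μ := fun ψ =>
        ((stronglyMeasurable_condExp.mono hm').aestronglyMeasurable.mul
          (stronglyMeasurable_condExp.mono hm').aestronglyMeasurable)
      have hmap : ∀ {ψ ψ' : β → ℝ}, Integrable ψ (μ.map B) → Integrable ψ' (μ.map B) →
          eLpNorm (fun ω => ψ (B ω) - ψ' (B ω)) 1 μ = eLpNorm (ψ - ψ') 1 (μ.map B) := by
        intro ψ ψ' hψ hψ'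
        have := eLpNorm_map_measure (p := (1 : ENNReal))
          (hψ.sub hψ').aestronglyMeasurable hB.aemeasurable
        simpa [Function.comp_def] using this.symm
      have est1 : ∀ ψ ψ' : β → ℝ, Integrable ψ (μ.map B) → Integrable ψ' (μ.map B) →
          eLpNorm (E1 ψ - E1 ψ') 1 μ ≤ eLpNorm (ψ - ψ') 1 (μ.map B) := by
        intro ψ ψ' hψ hψ'
        have h1 : E1 ψ - E1 ψ' =ᵐ[μ]
            μ[(fun ω => e ω * ψ (B ω)) - (fun ω => e ω * ψ' (B ω))|m'] :=
          (condExp_sub (hemul (hcomp hψ)) (hemul (hcomp hψ')) _).symm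
        rw [eLpNorm_congr_ae h1]
        refine le_trans (eLpNorm_one_condExp_le_eLpNorm _) ?_
        rw [← hmap hψ hψ']
        refine eLpNorm_mono_ae (Eventually.of_forall fun ω => ?_)
        simp only [Pi.sub_apply]
        rw [← mul_sub, norm_mul]
        exact le_trans (mul_le_mul_of_nonneg_right (he_bd ω) (norm_nonneg _))
          (by rw [one_mul])
      have est2 : ∀ ψ ψ' : β → ℝ, Integrable ψ (μ.map B) → Integrable ψ' (μ.map B) →
          eLpNorm (E2 ψ - E2 ψ') 1 μ ≤ eLpNorm (ψ - ψ') 1 (μ.map B) := by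
        intro ψ ψ' hψ hψ'
        have hbd : ∀ᵐ ω ∂μ, |(μ[e|m']) ω| ≤ ((1 : NNReal) : ℝ) :=
          ae_bdd_condExp_of_ae_bdd (Eventually.of_forall fun ω => by
            simpa [Real.norm_eq_abs] using he_bd ω)
        have step : eLpNorm (E2 ψ - E2 ψ') 1 μ
            ≤ eLpNorm (μ[(fun ω => ψ (B ω))|m'] - μ[(fun ω => ψ' (B ω))|m']) 1 μ := by
          refine eLpNorm_mono_ae ?_
          filter_upwards [hbd] with ω hω
          simp only [Pi.sub_apply, E2]
          rw [← mul_sub, norm_mul]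
          refine le_trans (mul_le_mul_of_nonneg_right ?_ (norm_nonneg _)) (by rw [one_mul])
          simpa [Real.norm_eq_abs] using hω
        refine step.trans ?_
        rw [eLpNorm_congr_ae (condExp_sub (hcomp hψ) (hcomp hψ') _).symm]
        refine le_trans (eLpNorm_one_condExp_le_eLpNorm _) ?_
        rw [← hmap hψ hψ']
        refine le_of_eq (eLpNorm_congr_ae (Eventually.of_forall fun ω => ?_))
        simp [Pi.sub_apply]
      have hδ : Tendsto (fun k => eLpNorm ((φ : β → ℝ) - (φs k : β → ℝ)) 1 (μ.map B))
          atTop (𝓝 0) := by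
        have h1 : ∀ k, eLpNorm ((φ : β → ℝ) - (φs k : β → ℝ)) 1 (μ.map B)
            = ENNReal.ofReal ‖φ - φs k‖ := by
          intro k
          calc eLpNorm ((φ : β → ℝ) - (φs k : β → ℝ)) 1 (μ.map B)
              = eLpNorm (⇑(φ - φs k)) 1 (μ.map B) :=
                (eLpNorm_congr_ae (Lp.coeFn_sub φ (φs k))).symm
            _ = ENNReal.ofReal ‖φ - φs k‖ := by
                rw [Lp.norm_def, ENNReal.ofReal_toReal (Lp.eLpNorm_ne_top _)]
        simp only [h1]
        have h2 : Tendsto (fun k => ‖φ - φs k‖) atTop (𝓝 0) := by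
          have := tendsto_iff_dist_tendsto_zero.mp hlim
          simpa [dist_eq_norm, norm_sub_rev] using this
        have := ENNReal.tendsto_ofReal h2
        simpa using this
      have hbound : ∀ k, eLpNorm (E1 ↑φ - E2 ↑φ) 1 μ
          ≤ eLpNorm ((φ : β → ℝ) - (φs k : β → ℝ)) 1 (μ.map B)
            + eLpNorm ((φ : β → ℝ) - (φs k : β → ℝ)) 1 (μ.map B) := by
        intro k
        have hk : E1 ↑(φs k) =ᵐ[μ] E2 ↑(φs k) := hmem k
        have hsplit : E1 ↑φ - E2 ↑φ =ᵐ[μ]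
            (E1 ↑φ - E1 ↑(φs k)) + (E2 ↑(φs k) - E2 ↑φ) := by
          filter_upwards [hk] with ω hω
          simp only [Pi.add_apply, Pi.sub_apply]
          rw [hω]; ring
        rw [eLpNorm_congr_ae hsplit]
        refine le_trans (eLpNorm_add_le ((hmE1 _).sub (hmE1 _)) ((hmE2 _).sub (hmE2 _))
          le_rfl) ?_
        refine add_le_add (est1 _ _ (L1.integrable_coeFn φ) (L1.integrable_coeFn (φs k))) ?_
        calc eLpNorm (E2 ↑(φs k) - E2 ↑φ) 1 μ
            ≤ eLpNorm ((φs k : β → ℝ) - (φ : β → ℝ)) 1 (μ.map B) :=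
              est2 _ _ (L1.integrable_coeFn (φs k)) (L1.integrable_coeFn φ)
          _ = eLpNorm ((φ : β → ℝ) - (φs k : β → ℝ)) 1 (μ.map B) := by
              rw [← eLpNorm_neg, neg_sub]
      have hzero : eLpNorm (E1 ↑φ - E2 ↑φ) 1 μ = 0 := by
        refine le_antisymm ?_ zero_le'
        have htend : Tendsto (fun k => eLpNorm ((φ : β → ℝ) - (φs k : β → ℝ)) 1 (μ.map B)
            + eLpNorm ((φ : β → ℝ) - (φs k : β → ℝ)) 1 (μ.map B)) atTop (𝓝 0) := by
          simpa using hδ.add hδ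
        exact ge_of_tendsto' htend hbound
      have hsub0 := (eLpNorm_eq_zero_iff ((hmE1 _).sub (hmE2 _)) one_ne_zero).mp hzero
      filter_upwards [hsub0] with ω hω
      have : E1 ↑φ ω - E2 ↑φ ω = 0 := by simpa [Pi.sub_apply] using hω
      linarith
    · -- stability under a.e. modification
      intro g1 g2 hae hint hP
      have hciB : (fun ω => g1 (B ω)) =ᵐ[μ] fun ω => g2 (B ω) :=
        ae_of_ae_map hB.aemeasurable hae
      have h1 : (fun ω => e ω * g1 (B ω)) =ᵐ[μ] fun ω => e ω * g2 (B ω) := by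
        filter_upwards [hciB] with ω hω; rw [hω]
      refine ((condExp_congr_ae h1).symm.trans hP).trans ?_
      filter_upwards [condExp_congr_ae (m := m') hciB] with ω hω
      rw [hω]
  exact main hh

theorem counterfactual_mean_balanced
    {Ω : Type*} [MeasurableSpace Ω] [StandardBorelSpace Ω]
    (μ : Measure Ω) [IsProbabilityMeasure μ]
    {m n d : ℕ}
    (X : Ω → Fin m → ℝ) (hX : Measurable X)
    (T : Ω → Bool) (hT : Measurable T)
    (Y : Bool → Ω → Fin d → ℝ) (hY : ∀ t, Measurable (Y t))
    (hYint : ∀ t, Integrable (Y t) μ)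
    (B : Ω → Fin n → ℝ) (hB : Measurable B)
    (F : Bool → (Fin n → ℝ) → Fin d → ℝ) (hF : ∀ t, Measurable (F t))
    (hFint : ∀ t, Integrable (fun ω => F t (B ω)) μ)
    -- `B` is a B-score with outcome-mean functions `F t`
    (hscore₁ : ∀ t, μ[Y t | MeasurableSpace.comap (fun ω => (B ω, X ω)) inferInstance]
        =ᵐ[μ] fun ω => F t (B ω))
    (hscore₂ : ∀ t, ∀ᵐ ω ∂μ, T ω = t →
        (μ[(fun ω => Y (T ω) ω) | MeasurableSpace.comap B inferInstance]) ω = F t (B ω))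
    -- balancing: `T ⟂ B | X`
    (hbal : CondIndepFun (MeasurableSpace.comap X inferInstance) hX.comap_le T B μ) :
    ∀ t : Bool,
      -- `μ_{1−t}(x) = E[F (1−t) (B) | X = x, T = t]` on the positivity region
      (∀ᵐ ω ∂μ, T ω = t →
        (μ[Y (!t) | MeasurableSpace.comap X inferInstance]) ω
          = (μ[(fun ω => F (!t) (B ω)) |
              MeasurableSpace.comap (fun ω => (X ω, T ω)) inferInstance]) ω)
      ∧
      -- equivalently, `μ_{1−t}(x) = E[F (1−t) (B) | X = x]`
      (μ[Y (!t) | MeasurableSpace.comap X inferInstance]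
        =ᵐ[μ] μ[(fun ω => F (!t) (B ω)) | MeasurableSpace.comap X inferInstance]) := by
  intro t
  have hmX : MeasurableSpace.comap X inferInstance ≤ ‹MeasurableSpace Ω› := hX.comap_le
  have hPmeas : Measurable (fun ω => (X ω, T ω)) := hX.prodMk hT
  have hmXT : MeasurableSpace.comap (fun ω => (X ω, T ω)) inferInstance
      ≤ ‹MeasurableSpace Ω› := hPmeas.comap_le
  have hle2 : MeasurableSpace.comap X inferInstance ≤
      MeasurableSpace.comap (fun ω => (X ω, T ω)) inferInstance := by
    rintro s ⟨A, hA, rfl⟩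
    exact ⟨A ×ˢ Set.univ, hA.prod MeasurableSet.univ, by ext ω; simp⟩
  have hfint : Integrable (fun ω => F (!t) (B ω)) μ := hFint (!t)
  -- the second (equivalent) formulation: tower property through `σ(B, X)`
  have hsecond : μ[Y (!t)|MeasurableSpace.comap X inferInstance]
      =ᵐ[μ] μ[(fun ω => F (!t) (B ω))|MeasurableSpace.comap X inferInstance] := by
    have hle : MeasurableSpace.comap X inferInstance ≤
        MeasurableSpace.comap (fun ω => (B ω, X ω)) inferInstance := by
      rintro s ⟨A, hA, rfl⟩
      exact ⟨Set.univ ×ˢ A, MeasurableSet.univ.prod hA, by ext ω; simp⟩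
    exact (condExp_condExp_of_le hle (hB.prodMk hX).comap_le).symm.trans
      (condExp_congr_ae (hscore₁ (!t)))
  -- rectangle identity, using balancing
  have key : ∀ (A : Set (Fin m → ℝ)), MeasurableSet A → ∀ (b : Bool),
      ∫ ω in X ⁻¹' A ∩ T ⁻¹' {b},
          (μ[(fun ω => F (!t) (B ω))|MeasurableSpace.comap X inferInstance]) ω ∂μ
        = ∫ ω in X ⁻¹' A ∩ T ⁻¹' {b}, F (!t) (B ω) ∂μ := by
    intro A hA b
    have hTb : MeasurableSet (T ⁻¹' {b}) := hT (measurableSet_singleton b)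
    have hXA : MeasurableSet[MeasurableSpace.comap X inferInstance] (X ⁻¹' A) := ⟨A, hA, rfl⟩
    have hXAΩ : MeasurableSet (X ⁻¹' A) := hX hA
    have he_meas : Measurable ((T ⁻¹' {b}).indicator (fun _ => (1:ℝ))) :=
      measurable_const.indicator hTb
    have he_bd : ∀ ω, ‖(T ⁻¹' {b}).indicator (fun _ => (1:ℝ)) ω‖ ≤ 1 := by
      intro ω; by_cases hω : ω ∈ T ⁻¹' {b} <;> simp [Set.indicator_apply, hω]
    have he_int : Integrable ((T ⁻¹' {b}).indicator (fun _ => (1:ℝ))) μ :=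
      (integrable_const (1:ℝ)).indicator hTb
    have hscalar : ∀ i : Fin d,
        ∫ ω in X ⁻¹' A ∩ T ⁻¹' {b},
            (μ[(fun ω => F (!t) (B ω))|MeasurableSpace.comap X inferInstance]) ω i ∂μ
          = ∫ ω in X ⁻¹' A ∩ T ⁻¹' {b}, F (!t) (B ω) i ∂μ := by
      intro i
      have hfi_int : Integrable (fun ω => F (!t) (B ω) i) μ :=
        (ContinuousLinearMap.proj (R := ℝ) (φ := fun _ : Fin d => ℝ) i).integrable_comp hfint
      have hgi : (fun ω =>
            (μ[(fun ω => F (!t) (B ω))|MeasurableSpace.comap X inferInstance]) ω i)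
          =ᵐ[μ] μ[(fun ω => F (!t) (B ω) i)|MeasurableSpace.comap X inferInstance] :=
        condexp_pi_eval hmX hfint i
      have e1 : Set.indicator (T ⁻¹' {b}) (fun ω =>
            (μ[(fun ω => F (!t) (B ω))|MeasurableSpace.comap X inferInstance]) ω i)
          = fun ω => (T ⁻¹' {b}).indicator (fun _ => (1:ℝ)) ω
              * (μ[(fun ω => F (!t) (B ω))|MeasurableSpace.comap X inferInstance]) ω i := by
        funext ω; by_cases hω : ω ∈ T ⁻¹' {b} <;> simp [Set.indicator_apply, hω]
      have e2 : Set.indicator (T ⁻¹' {b}) (fun ω => F (!t) (B ω) i)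
          = fun ω => (T ⁻¹' {b}).indicator (fun _ => (1:ℝ)) ω * F (!t) (B ω) i := by
        funext ω; by_cases hω : ω ∈ T ⁻¹' {b} <;> simp [Set.indicator_apply, hω]
      rw [← setIntegral_indicator hTb, ← setIntegral_indicator hTb, e1, e2]
      -- integrability facts
      have h_me : Integrable (fun ω =>
          (μ[(fun ω => F (!t) (B ω) i)|MeasurableSpace.comap X inferInstance]) ω
            * (T ⁻¹' {b}).indicator (fun _ => (1:ℝ)) ω) μ := by
        have := integrable_condExp
          (μ := μ) (f := fun ω => F (!t) (B ω) i) (m := MeasurableSpace.comap X inferInstance)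
          |>.bdd_mul he_meas.aestronglyMeasurable (Eventually.of_forall he_bd)
        exact this.congr (Eventually.of_forall fun ω => by
          simp [Pi.mul_apply, mul_comm])
      have hef_int : Integrable (fun ω =>
          (T ⁻¹' {b}).indicator (fun _ => (1:ℝ)) ω * F (!t) (B ω) i) μ :=
        hfi_int.bdd_mul he_meas.aestronglyMeasurable (Eventually.of_forall he_bd)
      -- the pull-out on the condexp side
      have hpull := condExp_mul_of_stronglyMeasurable_left
        (m := MeasurableSpace.comap X inferInstance) (μ := μ)
        (f := μ[(fun ω => F (!t) (B ω) i)|MeasurableSpace.comap X inferInstance])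
        (g := (T ⁻¹' {b}).indicator (fun _ => (1:ℝ)))
        stronglyMeasurable_condExp h_me he_int
      -- the conditional-independence identity
      have hFi_meas : Measurable (fun x : Fin n → ℝ => F (!t) x i) :=
        (measurable_pi_apply i).comp (hF (!t))
      have hh_map : Integrable (fun x : Fin n → ℝ => F (!t) x i) (μ.map B) := by
        refine (integrable_map_measure hFi_meas.aestronglyMeasurable
          hB.aemeasurable).mpr ?_
        exact hfi_int
      have hkey := condexp_indicator_mul_comp_of_condIndepFun
        (hm' := hX.comap_le) hT hB hbal b hh_map
      calc ∫ ω in X ⁻¹' A, (T ⁻¹' {b}).indicator (fun _ => (1:ℝ)) ω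
              * (μ[(fun ω => F (!t) (B ω))|MeasurableSpace.comap X inferInstance]) ω i ∂μ
          = ∫ ω in X ⁻¹' A,
              (μ[(fun ω => F (!t) (B ω) i)|MeasurableSpace.comap X inferInstance]) ω
                * (T ⁻¹' {b}).indicator (fun _ => (1:ℝ)) ω ∂μ := by
            refine setIntegral_congr_ae hXAΩ ?_
            filter_upwards [hgi] with ω hω _
            rw [hω]; ring
        _ = ∫ ω in X ⁻¹' A,
              (μ[(fun ω =>
                (μ[(fun ω => F (!t) (B ω) i)|MeasurableSpace.comap X inferInstance]) ω
                  * (T ⁻¹' {b}).indicator (fun _ => (1:ℝ)) ω)|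
                MeasurableSpace.comap X inferInstance]) ω ∂μ :=
            (setIntegral_condExp hmX h_me hXA).symm
        _ = ∫ ω in X ⁻¹' A,
              (μ[(fun ω => F (!t) (B ω) i)|MeasurableSpace.comap X inferInstance]) ω
                * (μ[(T ⁻¹' {b}).indicator (fun _ => (1:ℝ))|
                    MeasurableSpace.comap X inferInstance]) ω ∂μ := by
            refine setIntegral_congr_ae hXAΩ ?_
            filter_upwards [hpull] with ω hω _
            exact hω
        _ = ∫ ω in X ⁻¹' A,
              (μ[(fun ω => (T ⁻¹' {b}).indicator (fun _ => (1:ℝ)) ω * F (!t) (B ω) i)|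
                MeasurableSpace.comap X inferInstance]) ω ∂μ := by
            refine setIntegral_congr_ae hXAΩ ?_
            filter_upwards [hkey] with ω hω _
            rw [hω]; ring
        _ = ∫ ω in X ⁻¹' A, (T ⁻¹' {b}).indicator (fun _ => (1:ℝ)) ω * F (!t) (B ω) i ∂μ :=
            setIntegral_condExp hmX hef_int hXA
    -- pass from scalar components to the vector identity
    funext i
    calc (∫ ω in X ⁻¹' A ∩ T ⁻¹' {b},
            (μ[(fun ω => F (!t) (B ω))|MeasurableSpace.comap X inferInstance]) ω ∂μ) i
        = ∫ ω in X ⁻¹' A ∩ T ⁻¹' {b},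
            (μ[(fun ω => F (!t) (B ω))|MeasurableSpace.comap X inferInstance]) ω i ∂μ :=
          ((ContinuousLinearMap.proj (R := ℝ) (φ := fun _ : Fin d => ℝ) i).integral_comp_comm
            integrable_condExp.integrableOn).symm
      _ = ∫ ω in X ⁻¹' A ∩ T ⁻¹' {b}, F (!t) (B ω) i ∂μ := hscalar i
      _ = (∫ ω in X ⁻¹' A ∩ T ⁻¹' {b}, F (!t) (B ω) ∂μ) i :=
          (ContinuousLinearMap.proj (R := ℝ) (φ := fun _ : Fin d => ℝ) i).integral_comp_comm
            hfint.integrableOn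
  -- conditioning on `(X, T)` is the same as conditioning on `X`, by balancing
  have hstepB : μ[(fun ω => F (!t) (B ω))|
        MeasurableSpace.comap (fun ω => (X ω, T ω)) inferInstance]
      =ᵐ[μ] μ[(fun ω => F (!t) (B ω))|MeasurableSpace.comap X inferInstance] := by
    refine (ae_eq_condExp_of_forall_setIntegral_eq hmXT hfint
      (fun s _ _ => integrable_condExp.integrableOn)
      (fun s hs _ => ?_)
      ((stronglyMeasurable_condExp.mono hle2).aestronglyMeasurable)).symm
    obtain ⟨E, hE, rfl⟩ := hs
    have hAm : ∀ b : Bool, MeasurableSet {x : Fin m → ℝ | (x, b) ∈ E} := fun b =>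
      (measurable_id.prodMk measurable_const) hE
    have hsplit : (fun ω => (X ω, T ω)) ⁻¹' E
        = (X ⁻¹' {x | (x, false) ∈ E} ∩ T ⁻¹' {false})
          ∪ (X ⁻¹' {x | (x, true) ∈ E} ∩ T ⁻¹' {true}) := by
      ext ω; cases hω : T ω <;> simp [Set.mem_preimage, hω]
    have hdisj : Disjoint (X ⁻¹' {x | (x, false) ∈ E} ∩ T ⁻¹' {false})
        (X ⁻¹' {x | (x, true) ∈ E} ∩ T ⁻¹' {true}) := by
      rw [Set.disjoint_left]; rintro ω ⟨-, h1⟩ ⟨-, h2⟩; simp_all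
    have hms : MeasurableSet (X ⁻¹' {x | (x, true) ∈ E} ∩ T ⁻¹' {true}) :=
      (hX (hAm true)).inter (hT (measurableSet_singleton true))
    rw [hsplit,
      setIntegral_union hdisj hms integrable_condExp.integrableOn
        integrable_condExp.integrableOn,
      setIntegral_union hdisj hms hfint.integrableOn hfint.integrableOn,
      key _ (hAm false) false, key _ (hAm true) true]
  refine ⟨?_, hsecond⟩
  filter_upwards [hsecond, hstepB] with ω h1 h2 _
  rw [h1]; exact h2.symm
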